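/- Let β = (1/2ⁿ)_{n≥1} and α = (1/(n(n+1)))_{n≥1} in ℓ¹. Then the map T : W_β → W_α sending w to the sequence in which w(n) is repeated 2^{n−1} times in succession (i.e., Tw = (w(1), w(2), w(2), w(3), w(3), w(3), w(3), ...)) is a linear isometry from W_β into W_α. -/

import Mathlib

open Filter Topology

noncomputable section

/-- `x` belongs to the hyperplane `W_α` of the space `c` of convergent real sequences:
`x` converges and its limit equals `∑' i, α i * x i` (sequences are 0-indexed). -/
def MemW (α x : ℕ → ℝ) : Prop :=
  (∃ l : ℝ, Tendsto x atTop (𝓝 l)) ∧ Tendsto x atTop (𝓝 (∑' i, α i * x i))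

/-- The sup norm of a real sequence. -/
def supNorm (x : ℕ → ℝ) : ℝ := ⨆ i, |x i|

/-- The element `r·e₁* = (r,0,0,…)` of `ℓ¹`. -/
def rSeq (r : ℝ) : ℕ → ℝ := fun i => if i = 0 then r else 0

lemma auxLogTendsto : Tendsto (fun m => Nat.log 2 (m + 1)) atTop atTop := by
  refine tendsto_atTop_atTop.2 fun b => ⟨2 ^ b, fun m hm => ?_⟩
  exact (Nat.le_log_iff_pow_le one_lt_two (by omega)).2 (by omega)

lemma auxLogEq (N k : ℕ) (hk : k < 2 ^ N) : Nat.log 2 (2 ^ N - 1 + k + 1) = N := by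
  have h1 : 1 ≤ 2 ^ N := Nat.one_le_two_pow
  have h2 : (2 : ℕ) ^ (N + 1) = 2 ^ N + 2 ^ N := by rw [pow_succ]; omega
  exact Nat.log_eq_of_pow_le_of_lt_pow (by omega) (by omega)

lemma auxAlphaTelescope {α : ℕ → ℝ}
    (hα : ∀ m, α m = 1 / (((m : ℝ) + 1) * ((m : ℝ) + 2))) (m : ℕ) :
    α m = (fun i : ℕ => 1 / ((i : ℝ) + 1)) m - (fun i : ℕ => 1 / ((i : ℝ) + 1)) (m + 1) := by
  simp only [hα]
  have h1 : ((m : ℝ) + 1) ≠ 0 := by positivity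
  have h2 : ((m : ℝ) + 2) ≠ 0 := by positivity
  push_cast
  rw [show ((m:ℝ) + 1 + 1) = (m:ℝ) + 2 by ring, div_sub_div _ _ h1 h2]
  rw [div_eq_div_iff (by positivity) (by positivity)]
  ring

lemma auxAlphaSummable {α : ℕ → ℝ}
    (hα : ∀ m, α m = 1 / (((m : ℝ) + 1) * ((m : ℝ) + 2))) : Summable α := by
  apply summable_of_sum_range_le (c := 1)
  · intro n; rw [hα]; positivity
  · intro n
    rw [Finset.sum_congr rfl (fun i _ => auxAlphaTelescope hα i),
      Finset.sum_range_sub' (fun i : ℕ => 1 / ((i : ℝ) + 1)) n]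
    have : (0 : ℝ) ≤ 1 / ((n : ℝ) + 1) := by positivity
    norm_num at this ⊢
    linarith

lemma auxBetaSummable {β : ℕ → ℝ} (hβ : ∀ m, β m = 1 / 2 ^ (m + 1)) : Summable β := by
  have : β = fun n => (1 / 2 : ℝ) * (1 / 2) ^ n := by
    funext n; rw [hβ n, pow_succ, one_div_pow]; ring
  rw [this]
  exact (summable_geometric_of_lt_one (by norm_num) (by norm_num)).mul_left _

theorem stmt9 (α β : ℕ → ℝ)
    (hα : ∀ m, α m = 1 / (((m : ℝ) + 1) * ((m : ℝ) + 2)))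
    (hβ : ∀ m, β m = 1 / 2 ^ (m + 1))
    (T : (ℕ → ℝ) → (ℕ → ℝ))
    (hT : ∀ w m, T w m = w (Nat.log 2 (m + 1))) :
    (∀ w, MemW β w → MemW α (T w) ∧ supNorm (T w) = supNorm w) ∧
    (∀ w v, MemW β w → MemW β v → T (w + v) = T w + T v) ∧
    (∀ (a : ℝ) (w : ℕ → ℝ), MemW β w → T (a • w) = a • T w) := by
  refine ⟨?_, fun w v _ _ => funext fun m => by simp [hT], fun a w _ => funext fun m => by simp [hT]⟩
  intro w hw
  obtain ⟨⟨l, hl⟩, hlim⟩ := hw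
  -- boundedness of w
  obtain ⟨M, hM⟩ : ∃ M : ℝ, ∀ n, |w n| ≤ M := by
    have h1 : Tendsto (fun n => |w n|) atTop (𝓝 |l|) := hl.abs
    obtain ⟨M, hM⟩ := h1.bddAbove_range
    exact ⟨M, fun n => hM ⟨n, rfl⟩⟩
  -- T w tends to the limit of w
  have hTw : T w = fun m => w (Nat.log 2 (m + 1)) := funext fun m => hT w m
  have htend : ∀ L : ℝ, Tendsto w atTop (𝓝 L) → Tendsto (T w) atTop (𝓝 L) := by
    intro L hL
    rw [hTw]
    exact hL.comp auxLogTendsto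
  -- summability
  have hαs : Summable α := auxAlphaSummable hα
  have hαnn : ∀ m, 0 ≤ α m := fun m => by rw [hα]; positivity
  have hsum : Summable (fun i => α i * T w i) := by
    refine Summable.of_norm_bounded (hαs.mul_right M) fun i => ?_
    rw [Real.norm_eq_abs, abs_mul, abs_of_nonneg (hαnn i)]
    exact mul_le_mul_of_nonneg_left (by rw [hT]; exact hM _) (hαnn i)
  have hβsum : Summable (fun n => β n * w n) := by
    refine Summable.of_norm_bounded ((auxBetaSummable hβ).mul_right M)
      fun n => ?_
    have hβnn : 0 ≤ β n := by rw [hβ]; positivity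
    rw [Real.norm_eq_abs, abs_mul, abs_of_nonneg hβnn]
    exact mul_le_mul_of_nonneg_left (hM _) hβnn
  -- the key partial sum identity
  have P : ∀ N, ∑ i ∈ Finset.range (2 ^ N - 1), α i * T w i
      = ∑ n ∈ Finset.range N, β n * w n := by
    intro N
    induction N with
    | zero => simp
    | succ N ih =>
      have h1 : 1 ≤ 2 ^ N := Nat.one_le_two_pow
      have block : ∀ k, k ≤ 2 ^ N →
          ∑ i ∈ Finset.range (2 ^ N - 1 + k), α i * T w i
          = (∑ n ∈ Finset.range N, β n * w n)
            + (1 / (2 : ℝ) ^ N - 1 / ((2 : ℝ) ^ N + k)) * w N := by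
        intro k hk
        induction k with
        | zero => simpa using ih
        | succ k ihk =>
          have hk' : k < 2 ^ N := by omega
          rw [show 2 ^ N - 1 + (k + 1) = (2 ^ N - 1 + k) + 1 by omega,
            Finset.sum_range_succ, ihk (by omega)]
          have hlog : T w (2 ^ N - 1 + k) = w N := by
            rw [hT, auxLogEq N k hk']
          have hcast : ((2 ^ N - 1 + k : ℕ) : ℝ) = 2 ^ N + k - 1 := by
            rw [Nat.cast_add, Nat.cast_sub h1]
            push_cast
            ring
          have hαv : α (2 ^ N - 1 + k)
              = 1 / (((2 : ℝ) ^ N + k) * ((2 : ℝ) ^ N + k + 1)) := by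
            rw [hα, hcast]; ring_nf
          have hx : (0 : ℝ) < (2 : ℝ) ^ N + k := by positivity
          have hx1 : (0 : ℝ) < (2 : ℝ) ^ N + k + 1 := by positivity
          rw [hlog, hαv]
          have : (1 : ℝ) / (((2 : ℝ) ^ N + k) * ((2 : ℝ) ^ N + k + 1))
              = 1 / ((2 : ℝ) ^ N + k) - 1 / ((2 : ℝ) ^ N + (k + 1 : ℕ)) := by
            push_cast
            rw [show ((2:ℝ) ^ N + ((k:ℝ) + 1)) = (2:ℝ) ^ N + (k:ℝ) + 1 by ring,
              div_sub_div _ _ hx.ne' hx1.ne']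
            rw [div_eq_div_iff (by positivity) (by positivity)]
            ring
          rw [this]
          ring
      have hfin := block (2 ^ N) le_rfl
      have hidx : 2 ^ N - 1 + 2 ^ N = 2 ^ (N + 1) - 1 := by
        have : (2 : ℕ) ^ (N + 1) = 2 ^ N + 2 ^ N := by rw [pow_succ]; omega
        omega
      rw [hidx] at hfin
      rw [hfin, Finset.sum_range_succ, hβ N]
      have : (1 : ℝ) / (2 : ℝ) ^ N - 1 / ((2 : ℝ) ^ N + (2 ^ N : ℕ))
          = 1 / 2 ^ (N + 1) := by
        have h2 : ((2 : ℝ) ^ N) ≠ 0 := by positivity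
        push_cast
        rw [pow_succ]
        field_simp
        ring
      rw [this]
  -- identification of the two sums
  have hteq : ∑' i, α i * T w i = ∑' n, β n * w n := by
    have h1 : Tendsto (fun N => ∑ i ∈ Finset.range (2 ^ N - 1), α i * T w i) atTop
        (𝓝 (∑' i, α i * T w i)) := by
      refine (hsum.hasSum.tendsto_sum_nat).comp ?_
      refine tendsto_atTop_mono (fun N => ?_) tendsto_id
      have := Nat.lt_two_pow_self (n := N)
      simp only [id]
      omega
    have h2 : Tendsto (fun N => ∑ n ∈ Finset.range N, β n * w n) atTop
        (𝓝 (∑' n, β n * w n)) := hβsum.hasSum.tendsto_sum_nat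
    have h1' : Tendsto (fun N => ∑ n ∈ Finset.range N, β n * w n) atTop
        (𝓝 (∑' i, α i * T w i)) := by
      refine h1.congr fun N => ?_
      exact P N
    exact tendsto_nhds_unique h1' h2
  constructor
  · constructor
    · exact ⟨_, htend _ hlim⟩
    · rw [hteq]
      exact htend _ hlim
  · -- sup norm equality
    have hsurj : Function.Surjective (fun i : ℕ => Nat.log 2 (i + 1)) := by
      intro n
      refine ⟨2 ^ n - 1, ?_⟩
      have h1 : 1 ≤ 2 ^ n := Nat.one_le_two_pow
      simp only
      rw [show 2 ^ n - 1 + 1 = 2 ^ n by omega, Nat.log_pow one_lt_two]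
    have hrange : (Set.range fun i => |T w i|) = Set.range fun n => |w n| := by
      have : (fun i => |T w i|) = (fun n => |w n|) ∘ (fun i : ℕ => Nat.log 2 (i + 1)) := by
        funext i; simp [hT]
      rw [this, Set.range_comp, hsurj.range_eq, Set.image_univ]
    simp only [supNorm, iSup]
    rw [hrange]
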